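/- Let r : ℝ → ℝ be twice continuously differentiable with 0 < r(t) < 1 for all t ∈ ℝ, and suppose that r satisfies the equation (1 − r(t)²)·r(t)·r''(t) = (1 − 2 r(t)²)·(2 r'(t)² + r(t)²(1 − r(t)²)) for all t ∈ ℝ. Then the function t ↦ r'(t)²/(r(t)⁴(1 − r(t)²)²) + 1/(r(t)²(1 − r(t)²)) is constant on ℝ. -/

import Mathlib

/-- The quantity `r'(t)²/(r(t)⁴(1−r(t)²)²) + 1/(r(t)²(1−r(t)²))` is conserved along
solutions of the minimal-surface ODE
`(1 − r²)·r·r'' = (1 − 2r²)·(2r'² + r²(1 − r²))`. -/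
theorem conserved_quantity_of_minimal_ode
    (r : ℝ → ℝ) (hr : ContDiff ℝ 2 r)
    (hr01 : ∀ t : ℝ, 0 < r t ∧ r t < 1)
    (hode : ∀ t : ℝ, (1 - r t ^ 2) * r t * deriv (deriv r) t
      = (1 - 2 * r t ^ 2) * (2 * (deriv r t) ^ 2 + r t ^ 2 * (1 - r t ^ 2))) :
    ∀ t₁ t₂ : ℝ,
      (deriv r t₁) ^ 2 / (r t₁ ^ 4 * (1 - r t₁ ^ 2) ^ 2) + 1 / (r t₁ ^ 2 * (1 - r t₁ ^ 2))
        = (deriv r t₂) ^ 2 / (r t₂ ^ 4 * (1 - r t₂ ^ 2) ^ 2)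
          + 1 / (r t₂ ^ 2 * (1 - r t₂ ^ 2)) := by
  have h2 : (2 : WithTop ℕ∞) = 1 + 1 := by norm_num
  have hd2 : ContDiff ℝ 1 (deriv r) := by
    rw [h2, contDiff_succ_iff_deriv] at hr
    exact hr.2.2
  have hrd : Differentiable ℝ r := hr.differentiable (by norm_num)
  have hrd2 : Differentiable ℝ (deriv r) := hd2.differentiable one_ne_zero
  set E : ℝ → ℝ := fun t =>
    (deriv r t) ^ 2 / (r t ^ 4 * (1 - r t ^ 2) ^ 2) + 1 / (r t ^ 2 * (1 - r t ^ 2)) with hE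
  have key : ∀ t : ℝ, HasDerivAt E 0 t := by
    intro t
    obtain ⟨h0, h1⟩ := hr01 t
    have hu : r t ≠ 0 := ne_of_gt h0
    have h1u : (1 : ℝ) - r t ^ 2 ≠ 0 := by nlinarith
    have hr' : HasDerivAt r (deriv r t) t := (hrd t).hasDerivAt
    have hr'' : HasDerivAt (deriv r) (deriv (deriv r) t) t := (hrd2 t).hasDerivAt
    have hnum : HasDerivAt (fun s => (deriv r s) ^ 2)
        ((2 : ℕ) * (deriv r t) ^ (2 - 1) * deriv (deriv r) t) t := hr''.pow 2
    have hp4 : HasDerivAt (fun s => r s ^ 4) ((4 : ℕ) * r t ^ (4 - 1) * deriv r t) t := hr'.pow 4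
    have hq : HasDerivAt (fun s => (1 : ℝ) - r s ^ 2)
        (0 - (2 : ℕ) * r t ^ (2 - 1) * deriv r t) t :=
      (hasDerivAt_const t (1 : ℝ)).sub (hr'.pow 2)
    have hq2 : HasDerivAt (fun s => ((1 : ℝ) - r s ^ 2) ^ 2)
        ((2 : ℕ) * ((1 : ℝ) - r t ^ 2) ^ (2 - 1) * (0 - (2 : ℕ) * r t ^ (2 - 1) * deriv r t)) t :=
      hq.pow 2
    have hden1 : HasDerivAt (fun s => r s ^ 4 * (1 - r s ^ 2) ^ 2) _ t := hp4.mul hq2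
    have hden2 : HasDerivAt (fun s => r s ^ 2 * (1 - r s ^ 2)) _ t := (hr'.pow 2).mul hq
    have hden1ne : r t ^ 4 * (1 - r t ^ 2) ^ 2 ≠ 0 :=
      mul_ne_zero (pow_ne_zero _ hu) (pow_ne_zero _ h1u)
    have hden2ne : r t ^ 2 * (1 - r t ^ 2) ≠ 0 := mul_ne_zero (pow_ne_zero _ hu) h1u
    have hE1 := hnum.div hden1 hden1ne
    have hE2 := (hasDerivAt_const t (1 : ℝ)).div hden2 hden2ne
    have hsum := hE1.add hE2
    refine hsum.congr_deriv ?_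
    symm
    have hO := hode t
    field_simp
    rw [Pi.pow_apply]
    linear_combination (-2 * r t ^ 3 * deriv r t * (r t ^ 10 - 3 * r t ^ 8 + 3 * r t ^ 6 - r t ^ 4 - r t ^ 2 + 1)
      - 2 * deriv r t * r t ^ 7 * (1 - r t ^ 2) ^ 3) * hO
  have hdiff : Differentiable ℝ E := fun t => (key t).differentiableAt
  intro t₁ t₂
  have := is_const_of_deriv_eq_zero hdiff (fun t => (key t).deriv) t₁ t₂
  simpa [hE] using this
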